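/- Let L(z) = K(z-1)^6 (z-a)^3 (z-b) / z^5 where K = (11+5√5)/216, a = (-3+√5)/2, b = (7-3√5)/2, viewed as a Laurent polynomial over ℂ, and let Q_0 = 1, Q_1 = z + z^{-1}, Q_2 = -(9+4√5)z^2 + (20+8√5)z + z^{-2}, Q_3 = (47/2 + (21/2)√5)z^3 - (195/2 + (87/2)√5)z^2 + (255/2 + (111/2)√5)z + z^{-3}, Q_4 = -(9+4√5)z^4 + (130+58√5)z^3 - (630+282√5)z^2 + (910+406√5)z + z^{-4}. If R_0, R_1, R_2, R_3, R_4 ∈ ℂ[z] are polynomials with Σ_{j=0}^{4} (R_j ∘ L) · Q_j = 0 as a Laurent polynomial (equivalently, as a function on ℂ \ {0}), then R_0 = R_1 = R_2 = R_3 = R_4 = 0. Consequently, the representation of a solution of the moment problem for L in the form Σ_{j=0}^{4} (R_j ∘ L) · Q_j is unique. -/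

import Mathlib

/-- The Laurent polynomial `L(z) = K (z-1)^6 (z-a)^3 (z-b) / z^5` with
`K = (11+5√5)/216`, `a = (-3+√5)/2`, `b = (7-3√5)/2`. -/
noncomputable def Lpoly : LaurentPolynomial ℂ :=
  LaurentPolynomial.C ((11 + 5 * (Real.sqrt 5 : ℂ)) / 216) *
    (LaurentPolynomial.T 1 - 1) ^ 6 *
    (LaurentPolynomial.T 1 - LaurentPolynomial.C ((-3 + (Real.sqrt 5 : ℂ)) / 2)) ^ 3 *
    (LaurentPolynomial.T 1 - LaurentPolynomial.C ((7 - 3 * (Real.sqrt 5 : ℂ)) / 2)) *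
    LaurentPolynomial.T (-5)

/-- The Laurent polynomials `Q_0 = 1`, `Q_1`, `Q_2`, `Q_3`, `Q_4`. -/
noncomputable def Qpoly : Fin 5 → LaurentPolynomial ℂ
  | 0 => 1
  | 1 => LaurentPolynomial.T 1 + LaurentPolynomial.T (-1)
  | 2 => LaurentPolynomial.C (-(9 + 4 * (Real.sqrt 5 : ℂ))) * LaurentPolynomial.T 2 +
      LaurentPolynomial.C (20 + 8 * (Real.sqrt 5 : ℂ)) * LaurentPolynomial.T 1 +
      LaurentPolynomial.T (-2)
  | 3 => LaurentPolynomial.C (47 / 2 + 21 / 2 * (Real.sqrt 5 : ℂ)) * LaurentPolynomial.T 3 -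
      LaurentPolynomial.C (195 / 2 + 87 / 2 * (Real.sqrt 5 : ℂ)) * LaurentPolynomial.T 2 +
      LaurentPolynomial.C (255 / 2 + 111 / 2 * (Real.sqrt 5 : ℂ)) * LaurentPolynomial.T 1 +
      LaurentPolynomial.T (-3)
  | 4 => LaurentPolynomial.C (-(9 + 4 * (Real.sqrt 5 : ℂ))) * LaurentPolynomial.T 4 +
      LaurentPolynomial.C (130 + 58 * (Real.sqrt 5 : ℂ)) * LaurentPolynomial.T 3 -
      LaurentPolynomial.C (630 + 282 * (Real.sqrt 5 : ℂ)) * LaurentPolynomial.T 2 +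
      LaurentPolynomial.C (910 + 406 * (Real.sqrt 5 : ℂ)) * LaurentPolynomial.T 1 +
      LaurentPolynomial.T (-4)

open Polynomial LaurentPolynomial

noncomputable def sq5 : ℂ := (Real.sqrt 5 : ℂ)

lemma sq5_sq : sq5 ^ 2 = 5 := by
  unfold sq5
  rw [← Complex.ofReal_pow]
  norm_cast
  rw [Real.sq_sqrt] <;> norm_num

lemma sq5_ne (q : ℝ) (hq : q ^ 2 ≠ 5) : sq5 ≠ (q : ℂ) := by
  intro h
  apply hq
  have : ((q:ℂ))^2 = 5 := by rw [← h]; exact sq5_sq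
  exact_mod_cast this

noncomputable def Kc : ℂ := (11 + 5 * sq5) / 216
noncomputable def ac : ℂ := (-3 + sq5) / 2
noncomputable def bc : ℂ := (7 - 3 * sq5) / 2

lemma Kc_ne : Kc ≠ 0 := by
  unfold Kc
  intro h
  have : sq5 = ((-11/5 : ℝ) : ℂ) := by
    push_cast
    field_simp at h ⊢
    linear_combination h
  exact sq5_ne (-11/5) (by norm_num) this

lemma ac_ne : ac ≠ 0 := by
  unfold ac
  intro h
  have : sq5 = ((3 : ℝ) : ℂ) := by
    push_cast
    field_simp at h ⊢
    linear_combination h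
  exact sq5_ne 3 (by norm_num) this

lemma bc_ne : bc ≠ 0 := by
  unfold bc
  intro h
  have : sq5 = ((7/3 : ℝ) : ℂ) := by
    push_cast
    field_simp at h ⊢
    linear_combination -h
  exact sq5_ne (7/3) (by norm_num) this



/-- the numerator polynomial -/
noncomputable def Lnum : Polynomial ℂ :=
  Polynomial.C Kc * (X - 1) ^ 6 * (X - Polynomial.C ac) ^ 3 * (X - Polynomial.C bc)

lemma Lnum_toLaurent : Polynomial.toLaurent Lnum = Lpoly * T 5 := by
  have : Lpoly * T 5 = LaurentPolynomial.C Kc * (T 1 - 1) ^ 6 *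
      (T 1 - LaurentPolynomial.C ac) ^ 3 * (T 1 - LaurentPolynomial.C bc) := by
    unfold Lpoly Kc ac bc sq5
    rw [mul_T_assoc]
    norm_num
  rw [this]
  unfold Lnum
  simp only [map_mul, map_pow, map_sub, map_one, Polynomial.toLaurent_C, Polynomial.toLaurent_X]

lemma Lnum_coeff0 : Lnum.coeff 0 = Kc * ac ^ 3 * bc := by
  rw [Polynomial.coeff_zero_eq_eval_zero]
  unfold Lnum
  simp
  ring

lemma Lnum_coeff0_ne : Lnum.coeff 0 ≠ 0 := by
  rw [Lnum_coeff0]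
  exact mul_ne_zero (mul_ne_zero Kc_ne (pow_ne_zero _ ac_ne)) bc_ne

lemma Lnum_ne : Lnum ≠ 0 := fun h => Lnum_coeff0_ne (by rw [h]; simp)

noncomputable def Sfun (p : Polynomial ℂ) (n : ℕ) : Polynomial ℂ :=
  ∑ k ∈ Finset.range (n + 1), Polynomial.C (p.coeff k) * Lnum ^ k * X ^ (5 * (n - k))

lemma Sfun_toLaurent (p : Polynomial ℂ) (n : ℕ) (hn : p.natDegree < n + 1) :
    Polynomial.toLaurent (Sfun p n) = Polynomial.aeval Lpoly p * T (5 * n) := by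
  rw [Polynomial.aeval_eq_sum_range' hn, Finset.sum_mul]
  unfold Sfun
  rw [map_sum]
  refine Finset.sum_congr rfl fun k hk => ?_
  rw [Finset.mem_range] at hk
  have hk' : k ≤ n := Nat.lt_succ_iff.mp hk
  simp only [map_mul, map_pow, Polynomial.toLaurent_C, Polynomial.toLaurent_X,
    Lnum_toLaurent, Algebra.smul_def, LaurentPolynomial.algebraMap_apply,
    Complex.coe_algebraMap]
  rw [mul_pow, T_pow, T_pow, mul_assoc, mul_assoc, ← T_add]
  rw [mul_one]
  have : ((k : ℤ) * 5 + ((5 * (n - k) : ℕ) : ℤ)) = 5 * (n : ℤ) := by omega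
  rw [this]
  simp [mul_assoc]

lemma Sfun_zero (n : ℕ) : Sfun 0 n = 0 := by simp [Sfun]

lemma Sfun_eq (p : Polynomial ℂ) (n : ℕ) (h : p.natDegree ≤ n) :
    Sfun p n = X ^ (5 * (n - p.natDegree)) * Sfun p p.natDegree := by
  unfold Sfun
  rw [Finset.mul_sum]
  rw [← Finset.sum_subset (Finset.range_subset_range.mpr (by omega : p.natDegree + 1 ≤ n + 1))]
  · refine Finset.sum_congr rfl fun k hk => ?_
    rw [Finset.mem_range] at hk
    have hk' : k ≤ p.natDegree := Nat.lt_succ_iff.mp hk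
    have h2 : 5 * (n - k) = 5 * (n - p.natDegree) + 5 * (p.natDegree - k) := by omega
    rw [h2, pow_add]
    ring
  · intro k _ hk
    rw [Finset.mem_range, Nat.lt_succ_iff, not_le] at hk
    rw [Polynomial.coeff_eq_zero_of_natDegree_lt hk]
    simp

lemma Sfun_coeff_zero (p : Polynomial ℂ) :
    (Sfun p p.natDegree).coeff 0 = p.leadingCoeff * (Lnum.coeff 0) ^ p.natDegree := by
  unfold Sfun
  rw [Polynomial.finset_sum_coeff]
  rw [Finset.sum_eq_single p.natDegree]
  · simp only [Nat.sub_self, mul_zero, pow_zero, mul_one,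
      Polynomial.coeff_zero_eq_eval_zero, Polynomial.eval_mul, Polynomial.eval_pow,
      Polynomial.eval_C, Polynomial.leadingCoeff]
  · intro k hk hne
    rw [Finset.mem_range, Nat.lt_succ_iff] at hk
    have h5 : 5 * (p.natDegree - k) ≠ 0 := by omega
    simp [Polynomial.coeff_zero_eq_eval_zero, zero_pow h5]
  · intro hmem
    simp at hmem

lemma Sfun_props (p : Polynomial ℂ) (n : ℕ) (hp : p ≠ 0) (h : p.natDegree ≤ n) :
    Sfun p n ≠ 0 ∧ (Sfun p n).natTrailingDegree = 5 * (n - p.natDegree) ∧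
      (Sfun p n).trailingCoeff ≠ 0 := by
  have hc0 : (Sfun p p.natDegree).coeff 0 ≠ 0 := by
    rw [Sfun_coeff_zero]
    exact mul_ne_zero (Polynomial.leadingCoeff_ne_zero.mpr hp)
      (pow_ne_zero _ Lnum_coeff0_ne)
  have hSd : Sfun p p.natDegree ≠ 0 := fun h0 => hc0 (by rw [h0]; simp)
  have hXm : (X : Polynomial ℂ) ^ (5 * (n - p.natDegree)) ≠ 0 := pow_ne_zero _ Polynomial.X_ne_zero
  have hdeg0 : (Sfun p p.natDegree).natTrailingDegree = 0 :=
    Polynomial.natTrailingDegree_eq_zero_of_constantCoeff_ne_zero hc0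
  refine ⟨?_, ?_, ?_⟩
  · rw [Sfun_eq p n h]
    exact mul_ne_zero hXm hSd
  · rw [Sfun_eq p n h, Polynomial.natTrailingDegree_mul hXm hSd,
      Polynomial.natTrailingDegree_X_pow, hdeg0, add_zero]
  · rw [Sfun_eq p n h, Polynomial.trailingCoeff_mul]
    apply mul_ne_zero
    · rw [Polynomial.trailingCoeff, Polynomial.natTrailingDegree_X_pow]
      simp
    · rwa [Polynomial.trailingCoeff, hdeg0]

noncomputable def Pq : Fin 5 → Polynomial ℂ
  | 0 => X ^ 4
  | 1 => X ^ 5 + X ^ 3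
  | 2 => Polynomial.C (-(9 + 4 * (Real.sqrt 5 : ℂ))) * X ^ 6 +
      Polynomial.C (20 + 8 * (Real.sqrt 5 : ℂ)) * X ^ 5 + X ^ 2
  | 3 => Polynomial.C (47 / 2 + 21 / 2 * (Real.sqrt 5 : ℂ)) * X ^ 7 -
      Polynomial.C (195 / 2 + 87 / 2 * (Real.sqrt 5 : ℂ)) * X ^ 6 +
      Polynomial.C (255 / 2 + 111 / 2 * (Real.sqrt 5 : ℂ)) * X ^ 5 + X
  | 4 => Polynomial.C (-(9 + 4 * (Real.sqrt 5 : ℂ))) * X ^ 8 +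
      Polynomial.C (130 + 58 * (Real.sqrt 5 : ℂ)) * X ^ 7 -
      Polynomial.C (630 + 282 * (Real.sqrt 5 : ℂ)) * X ^ 6 +
      Polynomial.C (910 + 406 * (Real.sqrt 5 : ℂ)) * X ^ 5 + 1

lemma Pq_toLaurent (j : Fin 5) : Polynomial.toLaurent (Pq j) = Qpoly j * T 4 := by
  fin_cases j <;>
  · simp only [Pq, Qpoly, map_add, map_sub, map_mul, map_one, Polynomial.toLaurent_C,
      Polynomial.toLaurent_X_pow, Polynomial.toLaurent_X, add_mul, sub_mul, one_mul,
      mul_T_assoc, ← T_add]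
    norm_num

lemma Pq_coeff (j : Fin 5) : (Pq j).coeff (4 - j.val) = 1 := by
  fin_cases j <;>
    simp [Pq, Polynomial.coeff_add, Polynomial.coeff_sub, Polynomial.coeff_C_mul,
      Polynomial.coeff_X_pow, Polynomial.coeff_X, Polynomial.coeff_one,
      Polynomial.coeff_mul_X_pow']

lemma Pq_ne (j : Fin 5) : Pq j ≠ 0 := fun h => by
  have := Pq_coeff j
  rw [h] at this
  simp at this

lemma Pq_coeff_low (j : Fin 5) (m : ℕ) (hm : m < 4 - j.val) : (Pq j).coeff m = 0 := by
  fin_cases j <;> simp only [Fin.val] at hm <;> interval_cases m <;>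
    simp [Pq, Polynomial.coeff_add, Polynomial.coeff_sub, Polynomial.coeff_C_mul,
      Polynomial.coeff_X_pow, Polynomial.coeff_X, Polynomial.coeff_one,
      Polynomial.coeff_mul_X_pow']

lemma Pq_ntd (j : Fin 5) : (Pq j).natTrailingDegree = 4 - j.val := by
  refine le_antisymm (Polynomial.natTrailingDegree_le_of_ne_zero (by rw [Pq_coeff]; norm_num))
    (Polynomial.le_natTrailingDegree (Pq_ne j) (Pq_coeff_low j))

lemma Pq_tc (j : Fin 5) : (Pq j).trailingCoeff = 1 := by
  rw [Polynomial.trailingCoeff, Pq_ntd, Pq_coeff]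

/-- If `R_0, …, R_4 ∈ ℂ[z]` satisfy `Σ_{j=0}^{4} (R_j ∘ L) · Q_j = 0` as a Laurent
polynomial, then `R_0 = ⋯ = R_4 = 0`; hence the representation of a solution of the
moment problem for `L` in this form is unique. -/
theorem stmt18 (R : Fin 5 → Polynomial ℂ)
    (h : (∑ j : Fin 5, Polynomial.aeval Lpoly (R j) * Qpoly j) = 0) :
    ∀ j, R j = 0 := by
  by_contra hc
  push_neg at hc
  obtain ⟨j0', hj0'⟩ := hc
  set n : ℕ := Finset.univ.sup (fun j => (R j).natDegree) with hn
  have hdeg : ∀ j, (R j).natDegree ≤ n := fun j => Finset.le_sup (f := fun j => (R j).natDegree) (Finset.mem_univ j)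
  set F : Fin 5 → Polynomial ℂ := fun j => Sfun (R j) n * Pq j with hF
  have hsum : ∑ j, F j = 0 := by
    apply Polynomial.toLaurent_injective
    rw [map_sum, map_zero]
    have hterm : ∀ j : Fin 5, Polynomial.toLaurent (F j)
        = (Polynomial.aeval Lpoly (R j) * Qpoly j) * T (5 * (n : ℤ) + 4) := by
      intro j
      rw [hF]
      simp only
      rw [map_mul, Sfun_toLaurent _ _ (Nat.lt_succ_of_le (hdeg j)), Pq_toLaurent, T_add]
      ring
    rw [Finset.sum_congr rfl (fun j _ => hterm j), ← Finset.sum_mul, h, zero_mul]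
  set s : Finset (Fin 5) := Finset.univ.filter (fun j => R j ≠ 0) with hs
  have hsum' : ∑ j ∈ s, F j = 0 := by
    rw [← hsum]
    apply Finset.sum_subset (Finset.subset_univ s)
    intro j _ hj
    rw [hs, Finset.mem_filter] at hj
    push_neg at hj
    have : R j = 0 := hj (Finset.mem_univ j)
    rw [hF]
    simp [this, Sfun_zero]
  have key : ∀ j ∈ s, F j ≠ 0 ∧
      (F j).natTrailingDegree = 5 * (n - (R j).natDegree) + (4 - j.val) ∧
      (F j).trailingCoeff ≠ 0 := by
    intro j hj
    have hRj : R j ≠ 0 := by rw [hs, Finset.mem_filter] at hj; exact hj.2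
    obtain ⟨h1, h2, h3⟩ := Sfun_props (R j) n hRj (hdeg j)
    refine ⟨mul_ne_zero h1 (Pq_ne j), ?_, ?_⟩
    · rw [hF]
      simp only
      rw [Polynomial.natTrailingDegree_mul h1 (Pq_ne j), h2, Pq_ntd]
    · rw [hF]
      simp only
      rw [Polynomial.trailingCoeff_mul, Pq_tc, mul_one]
      exact h3
  have hs_ne : s.Nonempty := ⟨j0', by rw [hs, Finset.mem_filter]; exact ⟨Finset.mem_univ _, hj0'⟩⟩
  obtain ⟨j0, hj0s, hmin⟩ := s.exists_min_image (fun j => (F j).natTrailingDegree) hs_ne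
  obtain ⟨hF0, hntd0, htc0⟩ := key j0 hj0s
  have hcoeff : (∑ j ∈ s, F j).coeff ((F j0).natTrailingDegree) = (F j0).trailingCoeff := by
    rw [Polynomial.finset_sum_coeff, Finset.sum_eq_single j0]
    · rfl
    · intro j hj hne
      obtain ⟨hFj, hntdj, _⟩ := key j hj
      apply Polynomial.coeff_eq_zero_of_lt_natTrailingDegree
      rcases lt_or_eq_of_le (hmin j hj) with hlt | heq
      · exact hlt
      · exfalso
        apply hne
        rw [hntd0, hntdj] at heq
        have hj4 : j.val < 5 := j.isLt
        have hj04 : j0.val < 5 := j0.isLt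
        exact Fin.ext (by omega)
    · intro hmem
      exact absurd hj0s hmem
  rw [hsum', Polynomial.coeff_zero] at hcoeff
  exact htc0 hcoeff.symm
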